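/- Let p ∈ (0,1) be real and let Δ, d⁻, d, n be natural numbers with Δ ≥ 2, 2 ≤ d⁻ ≤ d, and n ≥ 1. Then (1-p)^{(Δ-1)·d/(d⁻-1)} · (1-p^{d⁻})^{Δ·n/d⁻ - (Δ-1)·d/(d⁻-1)} ≥ ( (1-p)^{d⁻/(d⁻-1)} · (1-p^{d⁻})^{2n/d⁻ - d⁻/(d⁻-1)} )^{(Δ-1)·d/d⁻}, where all powers with real exponents are real powers (rpow). -/

import Mathlib

theorem exp_nb (p : ℝ) (hp0 : 0 < p) (hp1 : p < 1)
    (Δ dm d n : ℕ) (hΔ : 2 ≤ Δ) (hdm : 2 ≤ dm) (hdmd : dm ≤ d) (hn : 1 ≤ n) :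
    (1 - p) ^ (((Δ : ℝ) - 1) * d / ((dm : ℝ) - 1)) *
      (1 - p ^ dm) ^ ((Δ : ℝ) * n / dm - ((Δ : ℝ) - 1) * d / ((dm : ℝ) - 1)) ≥
    ((1 - p) ^ ((dm : ℝ) / ((dm : ℝ) - 1)) *
      (1 - p ^ dm) ^ (2 * (n : ℝ) / dm - (dm : ℝ) / ((dm : ℝ) - 1)))
        ^ (((Δ : ℝ) - 1) * d / dm) := by
  have hdm' : (2:ℝ) ≤ (dm:ℝ) := by exact_mod_cast hdm
  have hΔ' : (2:ℝ) ≤ (Δ:ℝ) := by exact_mod_cast hΔ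
  have hd' : (dm:ℝ) ≤ (d:ℝ) := by exact_mod_cast hdmd
  have hn' : (1:ℝ) ≤ (n:ℝ) := by exact_mod_cast hn
  have hdm0 : (0:ℝ) < (dm:ℝ) := by linarith
  have hdm1 : (0:ℝ) < (dm:ℝ) - 1 := by linarith
  have ha : 0 < 1 - p := by linarith
  have hpd : p ^ dm < 1 := pow_lt_one₀ hp0.le hp1 (by omega)
  have hppos : 0 < p ^ dm := pow_pos hp0 dm
  have hb0 : 0 < 1 - p ^ dm := by linarith
  have hb1 : 1 - p ^ dm ≤ 1 := by linarith
  rw [Real.mul_rpow (by positivity) (by positivity), ← Real.rpow_mul ha.le,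
    ← Real.rpow_mul hb0.le]
  have e1 : (dm:ℝ) / ((dm:ℝ) - 1) * (((Δ:ℝ) - 1) * d / dm)
      = ((Δ:ℝ) - 1) * d / ((dm:ℝ) - 1) := by
    field_simp
  have key : (Δ:ℝ) * n / dm ≤ 2 * n * ((Δ:ℝ) - 1) * d / (dm * dm) := by
    rw [div_le_div_iff₀ hdm0 (by positivity)]
    nlinarith [mul_le_mul_of_nonneg_left hd' (by positivity : (0:ℝ) ≤ (Δ:ℝ) * n * dm),
      mul_nonneg (mul_nonneg (mul_nonneg (by linarith : (0:ℝ) ≤ (Δ:ℝ) - 2)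
        (by linarith : (0:ℝ) ≤ (n:ℝ))) (by positivity : (0:ℝ) ≤ (d:ℝ))) hdm0.le]
  have e2 : (2 * (n:ℝ) / dm - (dm:ℝ) / ((dm:ℝ) - 1)) * (((Δ:ℝ) - 1) * d / dm)
      = 2 * n * ((Δ:ℝ) - 1) * d / (dm * dm) - ((Δ:ℝ) - 1) * d / ((dm:ℝ) - 1) := by
    field_simp
  have hexp : (Δ:ℝ) * n / dm - ((Δ:ℝ) - 1) * d / ((dm:ℝ) - 1)
      ≤ (2 * (n:ℝ) / dm - (dm:ℝ) / ((dm:ℝ) - 1)) * (((Δ:ℝ) - 1) * d / dm) := by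
    rw [e2]; linarith
  rw [e1]
  exact mul_le_mul_of_nonneg_left
    (Real.rpow_le_rpow_of_exponent_ge hb0 hb1 hexp) (by positivity)
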